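/- arXiv:2103.02908 — 2 statements merged into one kernel-verified Lean document; each statement's English description precedes it below -/
import Mathlib

section
/- Let n = n_0 + n_1 + ⋯ + n_s with consecutive blocks I_0,…,I_s of sizes n_0,…,n_s in {1,…,n}, where n_j ≥ 2 for j = 1,…,s and n_0 ≥ 0. In so(n), let h := {X ∈ so(n) : X_ab = 0 unless a and b lie in the same block I_j for some j ≥ 1}. Then the Lie algebra normalizer {Y ∈ so(n) : [Y, X] ∈ h for all X ∈ h} equals the subalgebra of block-diagonal skew-symmetric matrices, i.e. {Y ∈ so(n) : Y_ab = 0 whenever a ∈ I_i, b ∈ I_j with i ≠ j}; equivalently, it equals k_0 ⊕ h where k_0 := {X ∈ so(n) : X_ab = 0 unless a, b ∈ I_0}. -/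
open Matrix

/-- Offset of the `j`-th block: `n_0 + ⋯ + n_{j-1}`. -/
def off (nn : ℕ → ℕ) (j : ℕ) : ℕ := ∑ i ∈ Finset.range j, nn i

/-- `a` (a 0-based index) lies in the block `I_j`. -/
def inBlock (nn : ℕ → ℕ) (j : ℕ) (a : ℕ) : Prop :=
  off nn j ≤ a ∧ a < off nn (j + 1)

lemma off_mono (nn : ℕ → ℕ) {i j : ℕ} (h : i ≤ j) : off nn i ≤ off nn j :=
  Finset.sum_le_sum_of_subset (Finset.range_subset_range.2 h)

lemma block_unique {nn : ℕ → ℕ} {i j a : ℕ} (hi : inBlock nn i a) (hj : inBlock nn j a) :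
    i = j := by
  rcases lt_trichotomy i j with h | h | h
  · exact absurd ((off_mono nn h).trans hj.1) (not_le.2 hi.2)
  · exact h
  · exact absurd ((off_mono nn h).trans hi.1) (not_le.2 hj.2)

lemma stdB_transpose {m : ℕ} (i j : Fin m) :
    (Matrix.single i j (1:ℝ))ᵀ = Matrix.single j i 1 := by
  ext p q
  simp only [transpose_apply, Matrix.single, of_apply]
  by_cases h1 : j = p <;> by_cases h2 : i = q <;> simp_all [and_comm]

lemma exists_block (nn : ℕ → ℕ) (s a : ℕ) (ha : a < off nn (s + 1)) :
    ∃ j, j ≤ s ∧ inBlock nn j a := by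
  induction s with
  | zero => exact ⟨0, le_refl 0, by simp [inBlock, off], ha⟩
  | succ s ih =>
    by_cases h : a < off nn (s + 1)
    · obtain ⟨j, hj, hb⟩ := ih h
      exact ⟨j, hj.trans (Nat.le_succ s), hb⟩
    · exact ⟨s + 1, le_refl _, not_lt.1 h, ha⟩

/-- in `so(n)`, the Lie algebra normalizer of the block-diagonally embedded
subalgebra `h = so(n_1) ⊕ ⋯ ⊕ so(n_s)` (with all `n_j ≥ 2`) is the subalgebra of
block-diagonal skew-symmetric matrices, which equals `k_0 ⊕ h` where `k_0 ≅ so(n_0)`. -/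
theorem stmt_13 (s : ℕ) (nn : ℕ → ℕ) (n : ℕ)
    (hn : n = ∑ i ∈ Finset.range (s + 1), nn i)
    (hsize : ∀ j, 1 ≤ j → j ≤ s → 2 ≤ nn j) :
    let hSet : Set (Matrix (Fin n) (Fin n) ℝ) :=
      {X | Xᵀ = -X ∧ ∀ a b : Fin n, X a b ≠ 0 →
        ∃ j, 1 ≤ j ∧ j ≤ s ∧ inBlock nn j (a : ℕ) ∧ inBlock nn j (b : ℕ)}
    let k0 : Set (Matrix (Fin n) (Fin n) ℝ) :=
      {X | Xᵀ = -X ∧ ∀ a b : Fin n, X a b ≠ 0 →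
        inBlock nn 0 (a : ℕ) ∧ inBlock nn 0 (b : ℕ)}
    let blockDiag : Set (Matrix (Fin n) (Fin n) ℝ) :=
      {Y | Yᵀ = -Y ∧ ∀ (a b : Fin n) (i j : ℕ), i ≤ s → j ≤ s → i ≠ j →
        inBlock nn i (a : ℕ) → inBlock nn j (b : ℕ) → Y a b = 0}
    ({Y | Yᵀ = -Y ∧ ∀ X ∈ hSet, ⁅Y, X⁆ ∈ hSet} = blockDiag) ∧
    (blockDiag = {Y | ∃ K ∈ k0, ∃ H ∈ hSet, Y = K + H}) := by
  classical
  intro hSet k0 blockDiag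
  have hno : n = off nn (s + 1) := hn
  -- every index lies in a block
  have hblk : ∀ a : Fin n, ∃ j, j ≤ s ∧ inBlock nn j (a : ℕ) := fun a =>
    exists_block nn s a (by rw [← hno]; exact a.2)
  constructor
  · ext Y
    simp only [hSet, blockDiag, Set.mem_setOf_eq]
    constructor
    · rintro ⟨hYs, hnorm⟩
      refine ⟨hYs, ?_⟩
      -- core claim: if the column block index is ≥ 1
      have core : ∀ (a b : Fin n) (i j : ℕ), i ≤ s → j ≤ s → i ≠ j → 1 ≤ j →
          inBlock nn i (a : ℕ) → inBlock nn j (b : ℕ) → Y a b = 0 := by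
        intro a b i j hi hj hij hj1 hia hjb
        by_contra hY0
        -- pick c in block j distinct from b
        have h2 : 2 ≤ nn j := hsize j hj1 hj
        have hoj : off nn (j + 1) = off nn j + nn j := Finset.sum_range_succ nn j
        set c₀ : ℕ := if (b : ℕ) = off nn j then off nn j + 1 else off nn j with hc₀
        have hcj : inBlock nn j c₀ := by
          constructor
          · simp only [hc₀]; split <;> omega
          · simp only [hc₀, hoj]; split <;> omega
        have hcb : c₀ ≠ (b : ℕ) := by
          simp only [hc₀]; split <;> omega
        have hcn : c₀ < n := by
          rw [hno]; exact lt_of_lt_of_le hcj.2 (off_mono nn (by omega))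
        obtain ⟨c, hcj', hcb'⟩ : ∃ c : Fin n, inBlock nn j ((c : Fin n) : ℕ) ∧ c ≠ b :=
          ⟨⟨c₀, hcn⟩, hcj, fun h => hcb (congrArg Fin.val h)⟩
        -- the test matrix
        set X : Matrix (Fin n) (Fin n) ℝ :=
          Matrix.single b c 1 - Matrix.single c b 1 with hX
        have hXmem : X ∈ hSet := by
          refine ⟨?_, ?_⟩
          · rw [hX, transpose_sub, stdB_transpose, stdB_transpose, neg_sub]
          · intro p q hpq
            have hmem : ((p : Fin n) = b ∧ q = c) ∨ (p = c ∧ q = b) := by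
              by_contra hcon
              push_neg at hcon
              apply hpq
              simp only [hX, Matrix.sub_apply]
              rcases Classical.em (p = b) with hp | hp
              · have : q ≠ c := hcon.1 hp
                simp [hp, Ne.symm this, hcb', hcb'.symm]
              · rcases Classical.em (p = c) with hp2 | hp2
                · have : q ≠ b := hcon.2 hp2
                  simp [hp2, Ne.symm this, hcb', hcb'.symm]
                · simp [Ne.symm hp, Ne.symm hp2]
            rcases hmem with ⟨hp, hq⟩ | ⟨hp, hq⟩ <;> subst hp <;> subst hq
            · exact ⟨j, hj1, hj, hjb, hcj'⟩
            · exact ⟨j, hj1, hj, hcj', hjb⟩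
        obtain ⟨_, hbr⟩ := hnorm X hXmem
        -- a is not b and not c
        have hab : a ≠ b := fun h => hij (block_unique (h ▸ hia) hjb)
        have hac : a ≠ c := fun h => hij (block_unique (h ▸ hia) hcj')
        have hentry : ⁅Y, X⁆ a c = Y a b := by
          rw [Ring.lie_def]
          simp [hX, Matrix.mul_sub, Matrix.sub_mul, Matrix.sub_apply, hcb', hcb'.symm, hab, hac]
        have := hbr a c (by rw [hentry]; exact hY0)
        obtain ⟨j', _, _, hja, hjc⟩ := this
        have : j' = j := block_unique hjc hcj' 
        exact hij (block_unique hia (this ▸ hja))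
      intro a b i j hi hj hij hia hjb
      rcases Nat.eq_zero_or_pos j with hj0 | hj1
      · -- then i ≥ 1; use skew symmetry
        have hi1 : 1 ≤ i := by omega
        have h0 : Y b a = 0 := core b a j i hj hi (Ne.symm hij) hi1 hjb hia
        have : Y a b = -Y b a := by
          have := congrFun (congrFun hYs b) a
          simpa [transpose_apply] using this
        rw [this, h0, neg_zero]
      · exact core a b i j hi hj hij hj1 hia hjb
    · rintro ⟨hYs, hbd⟩
      refine ⟨hYs, ?_⟩
      intro X hXm
      obtain ⟨hXs, hXb⟩ := hXm
      refine ⟨?_, ?_⟩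
      · rw [Ring.lie_def, transpose_sub, transpose_mul, transpose_mul, hYs, hXs]
        simp [Matrix.neg_mul, Matrix.mul_neg]
      · intro a b hab
        rw [Ring.lie_def, Matrix.sub_apply] at hab
        have : (Y * X) a b ≠ 0 ∨ (X * Y) a b ≠ 0 := by
          by_contra h
          push_neg at h
          rw [h.1, h.2, sub_zero] at hab
          exact hab rfl
        rcases this with h | h
        · rw [mul_apply] at h
          obtain ⟨c, _, hc⟩ := Finset.exists_ne_zero_of_sum_ne_zero h
          have hY : Y a c ≠ 0 := fun h0 => hc (by rw [h0, zero_mul])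
          have hX : X c b ≠ 0 := fun h0 => hc (by rw [h0, mul_zero])
          obtain ⟨j, hj1, hjs, hjc, hjb⟩ := hXb c b hX
          obtain ⟨i, his, hia⟩ := hblk a
          have hij : i = j := by
            by_contra hne
            exact hY (hbd a c i j his hjs hne hia hjc)
          exact ⟨j, hj1, hjs, hij ▸ hia, hjb⟩
        · rw [mul_apply] at h
          obtain ⟨c, _, hc⟩ := Finset.exists_ne_zero_of_sum_ne_zero h
          have hX : X a c ≠ 0 := fun h0 => hc (by rw [h0, zero_mul])
          have hY : Y c b ≠ 0 := fun h0 => hc (by rw [h0, mul_zero])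
          obtain ⟨j, hj1, hjs, hja, hjc⟩ := hXb a c hX
          obtain ⟨i, his, hib⟩ := hblk b
          have hij : j = i := by
            by_contra hne
            exact hY (hbd c b j i hjs his hne hjc hib)
          exact ⟨j, hj1, hjs, hja, hij ▸ hib⟩
  · ext Y
    simp only [hSet, k0, blockDiag, Set.mem_setOf_eq]
    constructor
    · rintro ⟨hYs, hbd⟩
      set K : Matrix (Fin n) (Fin n) ℝ := fun a b =>
        if inBlock nn 0 (a : ℕ) ∧ inBlock nn 0 (b : ℕ) then Y a b else 0 with hK
      have hKent : ∀ a b, K a b =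
          if inBlock nn 0 (a : ℕ) ∧ inBlock nn 0 (b : ℕ) then Y a b else 0 := fun a b => rfl
      refine ⟨K, ⟨?_, ?_⟩, Y - K, ⟨?_, ?_⟩, by abel⟩
      · ext a b
        have hYab : Y b a = -Y a b := by
          have := congrFun (congrFun hYs a) b
          simpa [transpose_apply] using this
        simp only [transpose_apply, Matrix.neg_apply, hKent, hYab, and_comm]
        split <;> simp
      · intro a b hab
        rw [hKent] at hab
        by_contra h
        rw [if_neg h] at hab
        exact hab rfl
      · ext a b
        have hYab : Y b a = -Y a b := by
          have := congrFun (congrFun hYs a) b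
          simpa [transpose_apply] using this
        simp only [transpose_apply, Matrix.sub_apply, Matrix.neg_apply, hKent, hYab, and_comm]
        split <;> ring
      · intro a b hab
        rw [Matrix.sub_apply, hKent] at hab
        by_cases h0 : inBlock nn 0 (a : ℕ) ∧ inBlock nn 0 (b : ℕ)
        · rw [if_pos h0, sub_self] at hab
          exact absurd rfl hab
        · rw [if_neg h0, sub_zero] at hab
          obtain ⟨i, his, hia⟩ := hblk a
          obtain ⟨j, hjs, hjb⟩ := hblk b
          have hij : i = j := by
            by_contra hne
            exact hab (hbd a b i j his hjs hne hia hjb)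
          subst hij
          have hi1 : 1 ≤ i := by
            rcases Nat.eq_zero_or_pos i with h | h
            · exact absurd ⟨h ▸ hia, h ▸ hjb⟩ h0
            · exact h
          exact ⟨i, hi1, his, hia, hjb⟩
    · rintro ⟨K, ⟨hKs, hKb⟩, H, ⟨hHs, hHb⟩, rfl⟩
      refine ⟨?_, ?_⟩
      · rw [transpose_add, hKs, hHs, neg_add]
      · intro a b i j his hjs hij hia hjb
        rw [Matrix.add_apply]
        have hK0 : K a b = 0 := by
          by_contra h
          obtain ⟨h0a, h0b⟩ := hKb a b h
          have : i = 0 := block_unique hia h0a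
          have : j = 0 := block_unique hjb h0b
          omega
        have hH0 : H a b = 0 := by
          by_contra h
          obtain ⟨j', _, _, hja, hjb'⟩ := hHb a b h
          have hi : i = j' := block_unique hia hja
          have hj : j = j' := block_unique hjb hjb'
          omega
        rw [hK0, hH0, add_zero]
end

section
/- Let n = n_0 + n_1 + ⋯ + n_s with consecutive blocks I_0,…,I_s of sizes n_0,…,n_s in {1,…,n}, where n_j ≥ 2 for j = 1,…,s and n_0 ≥ 0. In so(n), set h := {X ∈ so(n) : X_ab = 0 unless a, b lie in the same block I_j for some j ≥ 1} and m_ij := span{e_ab : a ∈ I_i, b ∈ I_j} for 0 ≤ i < j ≤ s. Let (i, j) and (l, m) be two distinct pairs with 0 ≤ i < j ≤ s and 0 ≤ l < m ≤ s, and suppose m_ij ≠ {0} and m_lm ≠ {0}. Then there is no linear isomorphism φ : m_ij → m_lm satisfying φ([a, X]) = [a, φ(X)] for all a ∈ h and X ∈ m_ij; that is, the submodules m_ij and m_lm are pairwise inequivalent as ad(h)-modules. -/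
open Matrix

/-- The matrix `e_ab := E_ab - E_ba`. -/
def eR (n : ℕ) (a b : Fin n) : Matrix (Fin n) (Fin n) ℝ :=
  Matrix.single a b 1 - Matrix.single b a 1

/-- so(n) as a submodule of the real `n × n` matrices. -/
def soSub (n : ℕ) : Submodule ℝ (Matrix (Fin n) (Fin n) ℝ) where
  carrier := {X | Xᵀ = -X}
  add_mem' := by
    intro a b ha hb
    simp only [Set.mem_setOf_eq] at *
    rw [Matrix.transpose_add, ha, hb, neg_add]
  zero_mem' := by simp
  smul_mem' := by
    intro r X hX
    simp only [Set.mem_setOf_eq] at *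
    rw [Matrix.transpose_smul, hX, smul_neg]

/-- The diagonal block `h_j := span{e_ab : a, b ∈ I_j, a < b}`. -/
def hBlock (n : ℕ) (nn : ℕ → ℕ) (j : ℕ) : Submodule ℝ (Matrix (Fin n) (Fin n) ℝ) :=
  Submodule.span ℝ {M | ∃ a b : Fin n,
    inBlock nn j (a : ℕ) ∧ inBlock nn j (b : ℕ) ∧ a < b ∧ M = eR n a b}

/-- The off-diagonal block `m_ij := span{e_ab : a ∈ I_i, b ∈ I_j}`. -/
def mBlock (n : ℕ) (nn : ℕ → ℕ) (i j : ℕ) : Submodule ℝ (Matrix (Fin n) (Fin n) ℝ) :=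
  Submodule.span ℝ {M | ∃ a b : Fin n,
    inBlock nn i (a : ℕ) ∧ inBlock nn j (b : ℕ) ∧ M = eR n a b}




lemma off_mono_s19 (nn : ℕ → ℕ) : Monotone (off nn) := by
  intro a b hab
  exact Finset.sum_le_sum_of_subset (Finset.range_subset_range.2 hab)

lemma inBlock_unique {nn : ℕ → ℕ} {t t' a : ℕ} (h : inBlock nn t a)
    (h' : inBlock nn t' a) : t = t' := by
  by_contra hne
  rcases Nat.lt_or_ge t t' with hlt | hge
  · exact absurd (lt_of_lt_of_le h.2 ((off_mono_s19 nn hlt).trans h'.1)) (lt_irrefl a)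
  · have hlt : t' < t := lt_of_le_of_ne hge (Ne.symm hne)
    exact absurd (lt_of_lt_of_le h'.2 ((off_mono_s19 nn hlt).trans h.1)) (lt_irrefl a)

lemma eR_skew (n : ℕ) (a b : Fin n) : (eR n a b)ᵀ = -(eR n a b) := by
  ext p q
  simp only [eR, Matrix.transpose_apply, Matrix.sub_apply, Matrix.neg_apply,
    Matrix.single]
  simp only [Matrix.of_apply]
  by_cases h1 : a = q ∧ b = p <;> by_cases h2 : b = q ∧ a = p <;>
    simp [h1, h2, and_comm] <;> tauto

lemma eR_apply (n : ℕ) (a b p q : Fin n) :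
    eR n a b p q = (if a = p ∧ b = q then (1:ℝ) else 0) - (if b = p ∧ a = q then 1 else 0) := by
  simp [eR, Matrix.single]

lemma eR_support {n : ℕ} {a b p q : Fin n} (h : eR n a b p q ≠ 0) :
    (p = a ∧ q = b) ∨ (p = b ∧ q = a) := by
  rw [eR_apply] at h
  by_cases h1 : a = p ∧ b = q
  · exact Or.inl ⟨h1.1.symm, h1.2.symm⟩
  by_cases h2 : b = p ∧ a = q
  · exact Or.inr ⟨h2.1.symm, h2.2.symm⟩
  simp [h1, h2] at h

lemma eR_ne_zero {n : ℕ} {a b : Fin n} (h : a ≠ b) : eR n a b ≠ 0 := by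
  intro hz
  have := congrFun (congrFun hz a) b
  rw [eR_apply] at this
  simp [h, h.symm] at this

lemma key_bracket {n : ℕ} {p q r : Fin n} (hpq : p ≠ q) (hrp : r ≠ p) (hrq : r ≠ q) :
    ⁅eR n p q, eR n r p⁆ = eR n q r := by
  rw [Ring.lie_def]
  simp only [eR, sub_mul, mul_sub]
  rw [Matrix.single_mul_single_of_ne (c := 1) p q _ hrq.symm,
      Matrix.single_mul_single_of_ne (c := 1) p q _ hpq.symm,
      Matrix.single_mul_single_of_ne (c := 1) q p _ hrp.symm,
      Matrix.single_mul_single_same (c := 1) q p r 1,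
      Matrix.single_mul_single_same (c := 1) r p q 1,
      Matrix.single_mul_single_of_ne (c := 1) r p _ hpq,
      Matrix.single_mul_single_of_ne (c := 1) p r _ hrp,
      Matrix.single_mul_single_of_ne (c := 1) p r _ hrq]
  simp

lemma mBlock_support {n : ℕ} {nn : ℕ → ℕ} {i j : ℕ} {X : Matrix (Fin n) (Fin n) ℝ}
    (hX : X ∈ mBlock n nn i j) : ∀ p q : Fin n, X p q ≠ 0 →
      (inBlock nn i (p : ℕ) ∧ inBlock nn j (q : ℕ)) ∨
      (inBlock nn j (p : ℕ) ∧ inBlock nn i (q : ℕ)) := by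
  induction hX using Submodule.span_induction with
  | mem x hx =>
    obtain ⟨a, b, ha, hb, rfl⟩ := hx
    intro p q hpq
    rcases eR_support hpq with ⟨rfl, rfl⟩ | ⟨rfl, rfl⟩
    · exact Or.inl ⟨ha, hb⟩
    · exact Or.inr ⟨hb, ha⟩
  | zero => intro p q h; simp at h
  | add x y hx hy ihx ihy =>
    intro p q h
    by_cases hx0 : x p q = 0
    · exact ihy p q (by simpa [Matrix.add_apply, hx0] using h)
    · exact ihx p q hx0
  | smul a x hx ih =>
    intro p q h
    have : x p q ≠ 0 := fun h0 => h (by simp [Matrix.smul_apply, h0])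
    exact ih p q this

lemma bracket_zero {n : ℕ} {nn : ℕ → ℕ} {i j t : ℕ} {p q : Fin n}
    (hp : inBlock nn t (p : ℕ)) (hq : inBlock nn t (q : ℕ))
    (hti : t ≠ i) (htj : t ≠ j) {X : Matrix (Fin n) (Fin n) ℝ}
    (hX : X ∈ mBlock n nn i j) : ⁅eR n p q, X⁆ = 0 := by
  have hsupp := mBlock_support hX
  rw [Ring.lie_def]
  have h1 : eR n p q * X = 0 := by
    ext x y
    rw [Matrix.mul_apply, Matrix.zero_apply]
    apply Finset.sum_eq_zero
    intro k _
    by_cases hk : eR n p q x k = 0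
    · rw [hk, zero_mul]
    by_cases hk2 : X k y = 0
    · rw [hk2, mul_zero]
    exfalso
    have h1 : inBlock nn t (k : ℕ) := by
      rcases eR_support hk with ⟨_, rfl⟩ | ⟨_, rfl⟩
      exacts [hq, hp]
    rcases hsupp k y hk2 with ⟨h2, _⟩ | ⟨h2, _⟩
    · exact hti (inBlock_unique h1 h2)
    · exact htj (inBlock_unique h1 h2)
  have h2 : X * eR n p q = 0 := by
    ext x y
    rw [Matrix.mul_apply, Matrix.zero_apply]
    apply Finset.sum_eq_zero
    intro k _
    by_cases hk : eR n p q k y = 0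
    · rw [hk, mul_zero]
    by_cases hk2 : X x k = 0
    · rw [hk2, zero_mul]
    exfalso
    have h1 : inBlock nn t (k : ℕ) := by
      rcases eR_support hk with ⟨rfl, _⟩ | ⟨rfl, _⟩
      exacts [hp, hq]
    rcases hsupp x k hk2 with ⟨_, h2⟩ | ⟨_, h2⟩
    · exact htj (inBlock_unique h1 h2)
    · exact hti (inBlock_unique h1 h2)
  rw [h1, h2, sub_zero]

lemma mBlock_nonbot {n : ℕ} {nn : ℕ → ℕ} {i j : ℕ} (h : mBlock n nn i j ≠ ⊥) :
    ∃ a b : Fin n, inBlock nn i (a : ℕ) ∧ inBlock nn j (b : ℕ) := by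
  by_contra hc
  push_neg at hc
  apply h
  rw [mBlock, Submodule.span_eq_bot]
  rintro M ⟨a, b, ha, hb, rfl⟩
  exact absurd hb (hc a b ha)

lemma exists_pq {s : ℕ} {nn : ℕ → ℕ} {n : ℕ}
    (hn : n = ∑ i ∈ Finset.range (s + 1), nn i) {t : ℕ}
    (hts : t ≤ s) (ht2 : 2 ≤ nn t) :
    ∃ p q : Fin n, inBlock nn t (p : ℕ) ∧ inBlock nn t (q : ℕ) ∧ p ≠ q := by
  have hoff : off nn (t + 1) = off nn t + nn t := Finset.sum_range_succ nn t
  have hle : off nn (t + 1) ≤ n := by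
    rw [hn]
    exact off_mono_s19 nn (Nat.succ_le_succ hts)
  have h1 : off nn t + 1 < n := by omega
  have h0 : off nn t < n := by omega
  refine ⟨⟨off nn t, h0⟩, ⟨off nn t + 1, h1⟩, ?_, ?_, ?_⟩ <;>
    simp only [inBlock, Fin.val_mk, ne_eq, Fin.mk.injEq] <;> omega

lemma eR_flip {n : ℕ} (a b : Fin n) : eR n a b = -(eR n b a) := by
  simp only [eR, neg_sub]

lemma eR_mem_mBlock {n : ℕ} {nn : ℕ → ℕ} {i j : ℕ} {a b : Fin n}
    (ha : inBlock nn i (a : ℕ)) (hb : inBlock nn j (b : ℕ)) :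
    eR n a b ∈ mBlock n nn i j :=
  Submodule.subset_span ⟨a, b, ha, hb, rfl⟩

lemma eR_supp_cond {s : ℕ} {nn : ℕ → ℕ} {n : ℕ} {t : ℕ} {p q : Fin n}
    (ht1 : 1 ≤ t) (hts : t ≤ s)
    (hp : inBlock nn t (p : ℕ)) (hq : inBlock nn t (q : ℕ)) :
    ∀ x y : Fin n, eR n p q x y ≠ 0 →
      ∃ u, 1 ≤ u ∧ u ≤ s ∧ inBlock nn u (x : ℕ) ∧ inBlock nn u (y : ℕ) := by
  intro x y h
  rcases eR_support h with ⟨rfl, rfl⟩ | ⟨rfl, rfl⟩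
  · exact ⟨t, ht1, hts, hp, hq⟩
  · exact ⟨t, ht1, hts, hq, hp⟩

lemma caseA (s : ℕ) (nn : ℕ → ℕ) (n : ℕ)
    (hn : n = ∑ i ∈ Finset.range (s + 1), nn i)
    (hsize : ∀ j, 1 ≤ j → j ≤ s → 2 ≤ nn j)
    (i j l m t : ℕ) (hij : i < j)
    (ht1 : 1 ≤ t) (hts : t ≤ s) (htij : t = i ∨ t = j) (htl : t ≠ l) (htm : t ≠ m)
    (hne1 : mBlock n nn i j ≠ ⊥)
    (φ : mBlock n nn i j ≃ₗ[ℝ] mBlock n nn l m)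
    (Hφ : ∀ a : Matrix (Fin n) (Fin n) ℝ, aᵀ = -a →
        (∀ p q : Fin n, a p q ≠ 0 →
          ∃ t, 1 ≤ t ∧ t ≤ s ∧ inBlock nn t (p : ℕ) ∧ inBlock nn t (q : ℕ)) →
        ∀ X : mBlock n nn i j,
          ∀ hmem : ⁅a, (X : Matrix (Fin n) (Fin n) ℝ)⁆ ∈ mBlock n nn i j,
            ((φ ⟨⁅a, (X : Matrix (Fin n) (Fin n) ℝ)⁆, hmem⟩ : mBlock n nn l m) :
                Matrix (Fin n) (Fin n) ℝ)
              = ⁅a, ((φ X : mBlock n nn l m) : Matrix (Fin n) (Fin n) ℝ)⁆) : False := by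
  obtain ⟨p, q, hp, hq, hpq⟩ := exists_pq hn hts (hsize t ht1 hts)
  obtain ⟨a0, b0, ha0, hb0⟩ := mBlock_nonbot hne1
  obtain ⟨X, hXmem, B, hbr, hbrmem, hbrne⟩ :
      ∃ X ∈ mBlock n nn i j,
        ∃ B, ⁅eR n p q, X⁆ = B ∧ B ∈ mBlock n nn i j ∧ B ≠ 0 := by
    rcases htij with rfl | rfl
    · -- t = i, take X := eR p b0 with b0 ∈ I_j
      have hrp : b0 ≠ p := by
        intro h; subst h; exact hij.ne' (inBlock_unique hb0 hp)
      have hrq : b0 ≠ q := by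
        intro h; subst h; exact hij.ne' (inBlock_unique hb0 hq)
      refine ⟨eR n p b0, eR_mem_mBlock hp hb0, eR n b0 q, ?_, ?_, ?_⟩
      · rw [eR_flip p b0, (by rw [Ring.lie_def, Ring.lie_def, mul_neg, neg_mul, neg_sub_neg, neg_sub] :
        ⁅eR n p q, -eR n b0 p⁆ = -⁅eR n p q, eR n b0 p⁆), key_bracket hpq hrp hrq, ← eR_flip]
      · rw [eR_flip b0 q]; exact Submodule.neg_mem _ (eR_mem_mBlock hq hb0)
      · exact eR_ne_zero hrq
    · -- t = j, take X := eR a0 p with a0 ∈ I_i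
      have hrp : a0 ≠ p := by
        intro h; subst h; exact hij.ne (inBlock_unique ha0 hp)
      have hrq : a0 ≠ q := by
        intro h; subst h; exact hij.ne (inBlock_unique ha0 hq)
      refine ⟨eR n a0 p, eR_mem_mBlock ha0 hp, eR n q a0, ?_, ?_, ?_⟩
      · exact key_bracket hpq hrp hrq
      · rw [eR_flip q a0]; exact Submodule.neg_mem _ (eR_mem_mBlock ha0 hq)
      · exact eR_ne_zero (fun h => hrq h.symm)
  have hmem : ⁅eR n p q, X⁆ ∈ mBlock n nn i j := hbr ▸ hbrmem
  have hEq := Hφ (eR n p q) (eR_skew n p q) (eR_supp_cond ht1 hts hp hq)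
    ⟨X, hXmem⟩ hmem
  have hz : ⁅eR n p q, ((φ ⟨X, hXmem⟩ : mBlock n nn l m) :
      Matrix (Fin n) (Fin n) ℝ)⁆ = 0 :=
    bracket_zero hp hq htl htm (φ ⟨X, hXmem⟩).2
  rw [hz] at hEq
  have h0 : φ ⟨⁅eR n p q, X⁆, hmem⟩ = 0 := ZeroMemClass.coe_eq_zero.mp hEq
  have h1 : (⟨⁅eR n p q, X⁆, hmem⟩ : mBlock n nn i j) = 0 :=
    (LinearEquiv.map_eq_zero_iff φ).mp h0
  have h2 : ⁅eR n p q, X⁆ = 0 := congrArg Subtype.val h1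
  exact hbrne (hbr ▸ h2)

lemma caseB (s : ℕ) (nn : ℕ → ℕ) (n : ℕ)
    (hn : n = ∑ i ∈ Finset.range (s + 1), nn i)
    (hsize : ∀ j, 1 ≤ j → j ≤ s → 2 ≤ nn j)
    (i j l m t : ℕ) (hlm : l < m)
    (ht1 : 1 ≤ t) (hts : t ≤ s) (htlm : t = l ∨ t = m) (hti : t ≠ i) (htj : t ≠ j)
    (hne2 : mBlock n nn l m ≠ ⊥)
    (φ : mBlock n nn i j ≃ₗ[ℝ] mBlock n nn l m)
    (Hφ : ∀ a : Matrix (Fin n) (Fin n) ℝ, aᵀ = -a →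
        (∀ p q : Fin n, a p q ≠ 0 →
          ∃ t, 1 ≤ t ∧ t ≤ s ∧ inBlock nn t (p : ℕ) ∧ inBlock nn t (q : ℕ)) →
        ∀ X : mBlock n nn i j,
          ∀ hmem : ⁅a, (X : Matrix (Fin n) (Fin n) ℝ)⁆ ∈ mBlock n nn i j,
            ((φ ⟨⁅a, (X : Matrix (Fin n) (Fin n) ℝ)⁆, hmem⟩ : mBlock n nn l m) :
                Matrix (Fin n) (Fin n) ℝ)
              = ⁅a, ((φ X : mBlock n nn l m) : Matrix (Fin n) (Fin n) ℝ)⁆) : False := by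
  obtain ⟨p, q, hp, hq, hpq⟩ := exists_pq hn hts (hsize t ht1 hts)
  obtain ⟨a0, b0, ha0, hb0⟩ := mBlock_nonbot hne2
  -- a nonzero-bracket witness in mBlock l m
  obtain ⟨Y, hYmem, hbrne⟩ :
      ∃ Y ∈ mBlock n nn l m, ⁅eR n p q, Y⁆ ≠ 0 := by
    rcases htlm with rfl | rfl
    · -- t = l, take Y := eR p b0 with b0 ∈ I_m
      have hrp : b0 ≠ p := by
        intro h; subst h; exact hlm.ne' (inBlock_unique hb0 hp)
      have hrq : b0 ≠ q := by
        intro h; subst h; exact hlm.ne' (inBlock_unique hb0 hq)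
      refine ⟨eR n p b0, eR_mem_mBlock hp hb0, ?_⟩
      rw [eR_flip p b0, (by rw [Ring.lie_def, Ring.lie_def, mul_neg, neg_mul, neg_sub_neg, neg_sub] :
        ⁅eR n p q, -eR n b0 p⁆ = -⁅eR n p q, eR n b0 p⁆), key_bracket hpq hrp hrq, ← eR_flip]
      exact eR_ne_zero hrq
    · -- t = m, take Y := eR a0 p with a0 ∈ I_l
      have hrp : a0 ≠ p := by
        intro h; subst h; exact hlm.ne (inBlock_unique ha0 hp)
      have hrq : a0 ≠ q := by
        intro h; subst h; exact hlm.ne (inBlock_unique ha0 hq)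
      refine ⟨eR n a0 p, eR_mem_mBlock ha0 hp, ?_⟩
      rw [key_bracket hpq hrp hrq]
      exact eR_ne_zero (fun h => hrq h.symm)
  set X : mBlock n nn i j := φ.symm ⟨Y, hYmem⟩ with hX
  have hz : ⁅eR n p q, (X : Matrix (Fin n) (Fin n) ℝ)⁆ = 0 :=
    bracket_zero hp hq hti htj X.2
  have hmem : ⁅eR n p q, (X : Matrix (Fin n) (Fin n) ℝ)⁆ ∈ mBlock n nn i j := by
    rw [hz]; exact Submodule.zero_mem _
  have hEq := Hφ (eR n p q) (eR_skew n p q) (eR_supp_cond ht1 hts hp hq) X hmem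
  have h0 : (⟨⁅eR n p q, (X : Matrix (Fin n) (Fin n) ℝ)⁆, hmem⟩ : mBlock n nn i j) = 0 :=
    Subtype.ext hz
  rw [h0, map_zero] at hEq
  have hφX : φ X = ⟨Y, hYmem⟩ := by rw [hX, LinearEquiv.apply_symm_apply]
  rw [hφX] at hEq
  exact hbrne hEq.symm

/-- for distinct pairs `(i,j) ≠ (l,m)`, the nonzero `ad(h)`-submodules
`m_ij` and `m_lm` of `so(n)` are inequivalent: there is no `ad(h)`-equivariant linear
isomorphism `m_ij → m_lm`, where `h` is the block-diagonally embedded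
`so(n_1) ⊕ ⋯ ⊕ so(n_s)` (all `n_t ≥ 2`). -/
theorem stmt_19 (s : ℕ) (nn : ℕ → ℕ) (n : ℕ)
    (hn : n = ∑ i ∈ Finset.range (s + 1), nn i)
    (hsize : ∀ j, 1 ≤ j → j ≤ s → 2 ≤ nn j)
    (i j l m : ℕ) (hij : i < j) (hjs : j ≤ s) (hlm : l < m) (hms : m ≤ s)
    (hdist : (i, j) ≠ (l, m))
    (hne1 : mBlock n nn i j ≠ ⊥) (hne2 : mBlock n nn l m ≠ ⊥) :
    ¬ ∃ φ : mBlock n nn i j ≃ₗ[ℝ] mBlock n nn l m,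
      ∀ a : Matrix (Fin n) (Fin n) ℝ, aᵀ = -a →
        (∀ p q : Fin n, a p q ≠ 0 →
          ∃ t, 1 ≤ t ∧ t ≤ s ∧ inBlock nn t (p : ℕ) ∧ inBlock nn t (q : ℕ)) →
        ∀ X : mBlock n nn i j,
          ∀ hmem : ⁅a, (X : Matrix (Fin n) (Fin n) ℝ)⁆ ∈ mBlock n nn i j,
            ((φ ⟨⁅a, (X : Matrix (Fin n) (Fin n) ℝ)⁆, hmem⟩ : mBlock n nn l m) :
                Matrix (Fin n) (Fin n) ℝ)
              = ⁅a, ((φ X : mBlock n nn l m) : Matrix (Fin n) (Fin n) ℝ)⁆ := by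
  rintro ⟨φ, Hφ⟩
  by_cases h1 : j = m
  · subst h1
    have hil : i ≠ l := fun h => hdist (by rw [h])
    by_cases h2 : 1 ≤ i
    · -- t = i : in (i,j), i ≠ l, i ≠ j(=m)
      exact caseA s nn n hn hsize i j l j i hij h2 (le_of_lt (lt_of_lt_of_le hij hjs))
        (Or.inl rfl) hil hij.ne hne1 φ Hφ
    · -- i = 0, so l ≥ 1; t = l : l ≠ i, l ≠ j
      have hi0 : i = 0 := by omega
      have hl1 : 1 ≤ l := by omega
      exact caseB s nn n hn hsize i j l j l hlm hl1 (le_of_lt (lt_of_lt_of_le hlm hjs))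
        (Or.inl rfl) (fun h => hil h.symm) hlm.ne hne2 φ Hφ
  · by_cases h3 : j = l
    · subst h3
      -- t = m : m ≠ i (m > j > i), m ≠ j
      exact caseB s nn n hn hsize i j j m m hlm (by omega) hms (Or.inr rfl)
        (by omega) (fun h => h1 h.symm) hne2 φ Hφ
    · -- t = j : j ≠ l, j ≠ m
      exact caseA s nn n hn hsize i j l m j hij (by omega) hjs (Or.inr rfl)
        h3 h1 hne1 φ Hφ
end
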